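/- arXiv:2108.04975 — 4 statements merged into one kernel-verified Lean document; each statement's English description precedes it below -/
import Mathlib

section
/- Under the cyclic face model with the perfect-orientation hypotheses, the number of switches equals l minus twice the number of black-to-white edges; that is, the cardinality of {i : ZMod l | o (i-1) ≠ o i} equals l - 2 * (cardinality of {i : ZMod l | edge i is black-to-white}). -/
theorem switches_eq_length_sub_two_mul_bw
    (l : ℕ) [NeZero l] (hl : Even l)
    (o : ZMod l → Bool)
    (hblack : ∀ i : ZMod l, Even i.val → ¬(o (i - 1) = false ∧ o i = true))
    (hwhite : ∀ i : ZMod l, ¬Even i.val → ¬(o (i - 1) = true ∧ o i = false)) :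
    (Finset.univ.filter (fun i : ZMod l => o (i - 1) ≠ o i)).card =
      l - 2 * (Finset.univ.filter (fun i : ZMod l =>
        (Even i.val ∧ o i = true) ∨ (¬Even i.val ∧ o i = false))).card := by
  classical
  have hl2 : 2 ≤ l := by
    rcases hl with ⟨k, hk⟩
    have := NeZero.pos l
    omega
  haveI : Fact (1 < l) := ⟨hl2⟩
  have step : ∀ k : ZMod l, Even (k + 1).val ↔ ¬ Even k.val := by
    intro k
    have hv : (k + 1).val = (k.val + 1) % l := by
      rw [ZMod.val_add, ZMod.val_one]
    have hk : k.val < l := ZMod.val_lt k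
    rcases Nat.lt_or_ge (k.val + 1) l with h | h
    · rw [hv, Nat.mod_eq_of_lt h, Nat.even_add_one]
    · have h' : k.val + 1 = l := by omega
      rw [hv, h', Nat.mod_self]
      obtain ⟨m, hm⟩ := hl
      rw [Nat.even_iff, Nat.even_iff]
      omega
  have hpar : ∀ j : ZMod l, Even (j - 1).val ↔ ¬ Even j.val := by
    intro j
    have h1 : j = (j - 1) + 1 := by ring
    have := step (j - 1)
    rw [← h1] at this
    tauto
  set P : ZMod l → Prop := fun i => (Even i.val ∧ o i = true) ∨ (¬Even i.val ∧ o i = false) with hP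
  set S := Finset.univ.filter (fun i : ZMod l => o (i - 1) ≠ o i) with hS
  set B := Finset.univ.filter (fun i : ZMod l => P i) with hB
  set B' := Finset.univ.filter (fun i : ZMod l => P (i - 1)) with hB'
  have master : ∀ i : ZMod l,
      ((o (i-1) ≠ o i) ∨ P i ∨ P (i-1)) ∧ ¬(P i ∧ P (i-1)) ∧
      ¬((P i ∨ P (i-1)) ∧ (o (i-1) ≠ o i)) := by
    intro i
    have hpi := hpar i
    have hpi2 : Odd (i - 1).val ↔ Even i.val := by
      rw [← Nat.not_even_iff_odd, hpi, not_not]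
    have hb := hblack i
    have hw := hwhite i
    by_cases he : Even i.val <;>
      cases h1 : o (i - 1) <;> cases h2 : o i <;>
        simp_all [hP]
  -- cardinality of B' equals cardinality of B
  have hcard' : B'.card = B.card := by
    apply Finset.card_bij' (fun i _ => i - 1) (fun j _ => j + 1)
    · intro a _; ring
    · intro a _; ring
    · intro a ha
      simp only [hB', Finset.mem_filter, Finset.mem_univ, true_and] at ha
      show a - 1 ∈ B
      simp only [hB, Finset.mem_filter]
      exact ⟨Finset.mem_univ _, ha⟩
    · intro a ha
      simp only [hB, Finset.mem_filter, Finset.mem_univ, true_and] at ha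
      simp only [hB', Finset.mem_filter]
      refine ⟨Finset.mem_univ _, ?_⟩
      have e : a + 1 - 1 = a := by ring
      rw [e]
      exact ha
  have hdisj1 : Disjoint B B' := by
    rw [Finset.disjoint_left]
    intro a haB haB'
    simp only [hB, hB', Finset.mem_filter, Finset.mem_univ, true_and] at haB haB'
    exact (master a).2.1 ⟨haB, haB'⟩
  have hdisj2 : Disjoint (B ∪ B') S := by
    rw [Finset.disjoint_left]
    intro a ha haS
    simp only [hB, hB', hS, Finset.mem_union, Finset.mem_filter, Finset.mem_univ, true_and] at ha haS
    exact (master a).2.2 ⟨ha, haS⟩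
  have hcover : B ∪ B' ∪ S = Finset.univ := by
    apply Finset.eq_univ_of_forall
    intro a
    simp only [hB, hB', hS, Finset.mem_union, Finset.mem_filter, Finset.mem_univ, true_and]
    have := (master a).1
    tauto
  have hcount : B.card + B'.card + S.card = l := by
    rw [← Finset.card_union_of_disjoint hdisj1, ← Finset.card_union_of_disjoint hdisj2, hcover,
      Finset.card_univ, ZMod.card]
  omega
end

section
/- In the cyclic face model (with no further hypotheses on the orientation o), the following parity identity holds: (cardinality of {i : ZMod l | o i = true}) + (cardinality of {i : ZMod l | edge i is black-to-white}) ≡ l/2 (mod 2). Consequently, the number of edges i with o i = true is odd if and only if: the number of black-to-white edges is odd when l is divisible by 4, and the number of black-to-white edges is even when l ≡ 2 (mod 4). -/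
lemma count_odd_range (m : ℕ) :
    ((Finset.range (2 * m)).filter (fun n => ¬ Even n)).card = m := by
  induction m with
  | zero => simp
  | succ k ih =>
      have h2 : 2 * (k + 1) = (2 * k + 1) + 1 := by ring
      rw [h2, Finset.range_add_one, Finset.filter_insert, Finset.range_add_one,
        Finset.filter_insert]
      have h1 : ¬ Even (2 * k + 1) := by simp [Nat.even_add_one]
      have h0 : Even (2 * k) := even_two_mul k
      rw [if_pos h1, if_neg (by simp)]
      rw [Finset.card_insert_of_notMem (by simp), ih]

lemma card_white (l : ℕ) [NeZero l] (hl : Even l) :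
    (Finset.univ.filter (fun i : ZMod l => ¬ Even i.val)).card = l / 2 := by
  obtain ⟨m, hm⟩ := hl
  have hb : (Finset.univ.filter (fun i : ZMod l => ¬ Even i.val)).card
      = ((Finset.range l).filter (fun n => ¬ Even n)).card := by
    apply Finset.card_bij (fun i _ => i.val)
    · intro a ha
      simp only [Finset.mem_filter, Finset.mem_range, Finset.mem_univ, true_and] at ha ⊢
      exact ⟨ZMod.val_lt a, ha⟩
    · intro a _ b _ h
      exact ZMod.val_injective l h
    · intro b hbb
      simp only [Finset.mem_filter, Finset.mem_range, Finset.mem_univ, true_and] at hbb ⊢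
      exact ⟨(b : ZMod l), by simp [ZMod.val_cast_of_lt hbb.1, hbb.2],
        by simp [ZMod.val_cast_of_lt hbb.1]⟩
  rw [hb]
  have h2m : l = 2 * m := by omega
  subst h2m
  rw [count_odd_range]
  omega

theorem kasteleyn_orientation_parity
    (l : ℕ) [NeZero l] (hl : Even l)
    (o : ZMod l → Bool) :
    ((Finset.univ.filter (fun i : ZMod l => o i = true)).card +
        (Finset.univ.filter (fun i : ZMod l =>
          (Even i.val ∧ o i = true) ∨ (¬Even i.val ∧ o i = false))).card)
      ≡ l / 2 [MOD 2] ∧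
    (Odd (Finset.univ.filter (fun i : ZMod l => o i = true)).card ↔
      ((4 ∣ l ∧ Odd (Finset.univ.filter (fun i : ZMod l =>
          (Even i.val ∧ o i = true) ∨ (¬Even i.val ∧ o i = false))).card) ∨
       (l % 4 = 2 ∧ Even (Finset.univ.filter (fun i : ZMod l =>
          (Even i.val ∧ o i = true) ∨ (¬Even i.val ∧ o i = false))).card))) := by
  classical
  set A := Finset.univ.filter (fun i : ZMod l => Even i.val ∧ o i = true) with hA
  set Bs := Finset.univ.filter (fun i : ZMod l => ¬Even i.val ∧ o i = true) with hBs
  set Cs := Finset.univ.filter (fun i : ZMod l => ¬Even i.val ∧ o i = false) with hCs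
  have dAB : Disjoint A Bs := by
    rw [Finset.disjoint_left]
    intro x hx hy
    simp only [hA, hBs, Finset.mem_filter] at hx hy
    tauto
  have dAC : Disjoint A Cs := by
    rw [Finset.disjoint_left]
    intro x hx hy
    simp only [hA, hCs, Finset.mem_filter] at hx hy
    tauto
  have dBC : Disjoint Bs Cs := by
    rw [Finset.disjoint_left]
    intro x hx hy
    simp only [hBs, hCs, Finset.mem_filter] at hx hy
    exact Bool.noConfusion (hx.2.2.symm.trans hy.2.2)
  have hBcard : (Finset.univ.filter (fun i : ZMod l => o i = true)).card
      = A.card + Bs.card := by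
    rw [← Finset.card_union_of_disjoint dAB, hA, hBs, ← Finset.filter_or]
    congr 1
    ext i
    simp only [Finset.mem_filter]
    tauto
  have hCcard : (Finset.univ.filter (fun i : ZMod l =>
      (Even i.val ∧ o i = true) ∨ (¬Even i.val ∧ o i = false))).card
      = A.card + Cs.card := by
    rw [← Finset.card_union_of_disjoint dAC, hA, hCs, ← Finset.filter_or]
  have hW : Bs.card + Cs.card = l / 2 := by
    rw [← card_white l hl, ← Finset.card_union_of_disjoint dBC, hBs, hCs,
      ← Finset.filter_or]
    congr 1
    ext i
    simp only [Finset.mem_filter]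
    constructor
    · tauto
    · rintro ⟨hu, he⟩
      cases h : o i
      · exact ⟨hu, Or.inr ⟨he, rfl⟩⟩
      · exact ⟨hu, Or.inl ⟨he, rfl⟩⟩
  rw [hBcard, hCcard]
  have h2 : l % 2 = 0 := Nat.even_iff.mp hl
  constructor
  · unfold Nat.ModEq
    omega
  · rw [Nat.odd_iff, Nat.odd_iff, Nat.even_iff, Nat.dvd_iff_mod_eq_zero]
    omega
end

section
/- Under the cyclic face model with the perfect-orientation hypotheses, let ext : ZMod l → ℝ satisfy ∑ i, ext i = 2π. For each i : ZMod l define c i ∈ ℂ by: c i = Complex.exp ((ext i / 2) * Complex.I) if vertex i is not a switch, and c i = Complex.exp (-((π - ext i) / 2) * Complex.I) if vertex i is a switch. Let bw be the cardinality of {i : ZMod l | edge i is black-to-white}. Then (-1)^bw * ∏ i, c i = (-1)^(l/2 + 1). -/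
open scoped Real

private lemma parity_flip (l : ℕ) [NeZero l] (hl : Even l) (i : ZMod l) :
    Even ((i + 1).val) ↔ ¬ Even i.val := by
  have h2 : (2:ℕ) ∣ l := hl.two_dvd
  have key : ∀ j : ZMod l, (Even j.val ↔ (ZMod.castHom h2 (ZMod 2)) j = 0) := by
    intro j
    rw [ZMod.castHom_apply, ← ZMod.natCast_val, ZMod.natCast_eq_zero_iff]
    exact even_iff_two_dvd
  rw [key, key, map_add, map_one]
  have h : ∀ x : ZMod 2, (x + 1 = 0 ↔ ¬ x = 0) := by decide
  exact h _

theorem turning_numbers_fractional_kasteleyn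
    (l : ℕ) [NeZero l] (hl : Even l)
    (o : ZMod l → Bool)
    (hblack : ∀ i : ZMod l, Even i.val → ¬(o (i - 1) = false ∧ o i = true))
    (hwhite : ∀ i : ZMod l, ¬Even i.val → ¬(o (i - 1) = true ∧ o i = false))
    (ext : ZMod l → ℝ) (hext : ∑ i : ZMod l, ext i = 2 * π)
    (c : ZMod l → ℂ)
    (hc : ∀ i : ZMod l, c i =
      if o (i - 1) ≠ o i then
        Complex.exp (-((((π : ℂ) - (ext i : ℂ)) / 2) * Complex.I))
      else
        Complex.exp (((ext i : ℂ) / 2) * Complex.I)) :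
    (-1 : ℂ) ^ (Finset.univ.filter (fun i : ZMod l =>
        (Even i.val ∧ o i = true) ∨ (¬Even i.val ∧ o i = false))).card *
      ∏ i : ZMod l, c i = (-1 : ℂ) ^ (l / 2 + 1) := by
  classical
  set P : ZMod l → Prop := fun i => (Even i.val ∧ o i = true) ∨ (¬Even i.val ∧ o i = false)
    with hP
  set bw := (Finset.univ.filter P).card with hbw
  set sw := (Finset.univ.filter (fun i : ZMod l => o (i - 1) ≠ o i)).card with hsw
  -- key pointwise identity
  have key : ∀ i : ZMod l,
      ((if P i then 1 else 0) + (if P (i + 1) then 1 else 0)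
        + (if o i ≠ o (i + 1) then 1 else 0) : ℕ) = 1 := by
    intro i
    have hpar := parity_flip l hl i
    have hb := hblack (i + 1)
    have hw := hwhite (i + 1)
    rw [add_sub_cancel_right] at hb hw
    by_cases he : Even i.val <;> by_cases ho : o i = true <;>
      by_cases ho1 : o (i + 1) = true <;>
      simp_all [hP]
  -- card identity : 2 * bw + sw = l
  have hshift : ∀ (f : ZMod l → ℕ), ∑ i : ZMod l, f (i + 1) = ∑ i : ZMod l, f i := by
    intro f
    exact Fintype.sum_equiv (Equiv.addRight (1 : ZMod l)) _ _ (fun i => rfl)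
  have hcard : 2 * bw + sw = l := by
    have hsum : ∑ i : ZMod l,
        ((if P i then 1 else 0) + (if P (i + 1) then 1 else 0)
          + (if o i ≠ o (i + 1) then 1 else 0) : ℕ) = l := by
      simp only [key]
      simp [ZMod.card]
    rw [Finset.sum_add_distrib, Finset.sum_add_distrib] at hsum
    rw [hshift (fun i => if P i then 1 else 0)] at hsum
    have h1 : ∑ i : ZMod l, (if P i then 1 else 0) = bw := by
      rw [hbw, Finset.card_filter]
    have h2 : ∑ i : ZMod l, (if o i ≠ o (i + 1) then 1 else 0) = sw := by
      rw [hsw, Finset.card_filter]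
      rw [← hshift (fun i => if o (i - 1) ≠ o i then 1 else 0)]
      simp
    omega
  -- analytic part
  have hswitchexp : Complex.exp (-(↑π/2) * Complex.I) = -Complex.I := by
    rw [Complex.exp_mul_I]
    simp [Complex.cos_pi_div_two, Complex.sin_pi_div_two]
  have hc' : ∀ i : ZMod l, c i = Complex.exp (((ext i : ℂ) / 2) * Complex.I) *
      (if o (i - 1) ≠ o i then (-Complex.I) else 1) := by
    intro i
    rw [hc i]
    by_cases h : o (i - 1) ≠ o i
    · rw [if_pos h, if_pos h, ← hswitchexp, ← Complex.exp_add]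
      ring_nf
    · rw [if_neg h, if_neg h, mul_one]
  have hprod : ∏ i : ZMod l, c i = -(-Complex.I) ^ sw := by
    calc ∏ i : ZMod l, c i
        = (∏ i : ZMod l, Complex.exp (((ext i : ℂ) / 2) * Complex.I)) *
          ∏ i : ZMod l, (if o (i - 1) ≠ o i then (-Complex.I) else 1) := by
          rw [← Finset.prod_mul_distrib]; exact Finset.prod_congr rfl (fun i _ => hc' i)
      _ = Complex.exp (∑ i : ZMod l, ((ext i : ℂ) / 2) * Complex.I) * (-Complex.I) ^ sw := by
          rw [Complex.exp_sum]
          congr 1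
          rw [hsw, ← Finset.prod_const (b := -Complex.I), Finset.prod_filter]
      _ = -(-Complex.I) ^ sw := by
          have : ∑ i : ZMod l, ((ext i : ℂ) / 2) * Complex.I = ↑π * Complex.I := by
            rw [← Finset.sum_mul, ← Finset.sum_div, ← Complex.ofReal_sum, hext]
            push_cast
            ring
          rw [this, Complex.exp_pi_mul_I]
          ring
  rw [hprod]
  have hII : (-Complex.I) ^ 2 = -1 := by
    simp [pow_two]
  have hfin : (-1 : ℂ) ^ bw * (-Complex.I) ^ sw = (-1 : ℂ) ^ (l / 2) := by
    calc (-1 : ℂ) ^ bw * (-Complex.I) ^ sw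
        = ((-Complex.I) ^ 2) ^ bw * (-Complex.I) ^ sw := by rw [hII]
      _ = (-Complex.I) ^ (2 * bw + sw) := by rw [← pow_mul, ← pow_add]
      _ = ((-Complex.I) ^ 2) ^ (l / 2) := by
          rw [← pow_mul, hcard]
          obtain ⟨k, hk⟩ := hl
          congr 1
          omega
      _ = (-1 : ℂ) ^ (l / 2) := by rw [hII]
  calc (-1 : ℂ) ^ bw * -(-Complex.I) ^ sw
      = -((-1 : ℂ) ^ bw * (-Complex.I) ^ sw) := by ring
    _ = (-1 : ℂ) ^ (l / 2 + 1) := by rw [hfin, pow_succ]; ring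
end

section
/- Let K be a field, let m and n be natural numbers, let A be an m×m matrix over K with det(1 - A) ≠ 0, let X be an n×m matrix over K, and let Y be an m×n matrix over K. Define the n×n matrix B := X * (1 - A)⁻¹ * Y. Then there exists a polynomial p ∈ K[T] with natural degree at most m such that p.eval 0 = det(1 - A) and, for every μ ∈ K, p.eval μ = det(1 - μ • B) * det(1 - A). -/
open Matrix Polynomial

theorem boundary_path_matrix_char_poly_is_polynomial
    (K : Type*) [Field K] (m n : ℕ)
    (A : Matrix (Fin m) (Fin m) K)
    (hA : (1 - A).det ≠ 0)
    (X : Matrix (Fin n) (Fin m) K)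
    (Y : Matrix (Fin m) (Fin n) K)
    (B : Matrix (Fin n) (Fin n) K)
    (hB : B = X * (1 - A)⁻¹ * Y) :
    ∃ p : Polynomial K, p.natDegree ≤ m ∧ p.eval 0 = (1 - A).det ∧
      ∀ μ : K, p.eval μ = (1 - μ • B).det * (1 - A).det := by
  set M : Matrix (Fin m) (Fin m) (Polynomial K) :=
    (Polynomial.X : K[X]) • (-(Y * X)).map Polynomial.C + (1 - A).map Polynomial.C with hM
  refine ⟨M.det, ?_, ?_, ?_⟩
  · simpa using Polynomial.natDegree_det_X_add_C_le (-(Y * X)) (1 - A)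
  · have h0 : Polynomial.eval 0 M.det = ((Polynomial.evalRingHom (0:K)).mapMatrix M).det :=
      RingHom.map_det (Polynomial.evalRingHom _) M
    rw [h0]
    congr 1
    ext i j
    simp only [hM, RingHom.mapMatrix_apply, Matrix.map_apply, Matrix.add_apply,
      Matrix.smul_apply, Matrix.sub_apply, Matrix.neg_apply, smul_eq_mul,
      Polynomial.eval_mul, Polynomial.eval_X, Polynomial.eval_C, Polynomial.eval_add,
      Polynomial.coe_evalRingHom, Matrix.one_apply]
    split <;> ring
  · intro μ
    have heval : Polynomial.eval μ M.det = ((1 - A) - μ • (Y * X)).det := by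
      have h0 : Polynomial.eval μ M.det = ((Polynomial.evalRingHom μ).mapMatrix M).det :=
        RingHom.map_det (Polynomial.evalRingHom _) M
      rw [h0]
      congr 1
      ext i j
      simp only [hM, RingHom.mapMatrix_apply, Matrix.map_apply, Matrix.add_apply,
        Matrix.smul_apply, Matrix.sub_apply, Matrix.neg_apply, smul_eq_mul,
        Polynomial.eval_mul, Polynomial.eval_X, Polynomial.eval_C, Polynomial.eval_add,
        Polynomial.coe_evalRingHom, Matrix.map_apply, Matrix.one_apply]
      ring
    rw [heval]
    have hu : IsUnit (1 - A).det := isUnit_iff_ne_zero.mpr hA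
    have hinv : (1 - A)⁻¹ * (1 - A) = 1 := Matrix.nonsing_inv_mul _ hu
    have h1 : (1 : Matrix (Fin n) (Fin n) K) - μ • B
        = 1 - (μ • (X * (1 - A)⁻¹)) * Y := by
      rw [hB, ← Matrix.smul_mul]
    have h2 : (1 - μ • B).det = (1 - μ • (Y * X * (1 - A)⁻¹)).det := by
      rw [h1, Matrix.det_one_sub_mul_comm]
      congr 1
      rw [Matrix.mul_smul, Matrix.mul_assoc]
    rw [h2, ← Matrix.det_mul]
    congr 1
    rw [Matrix.sub_mul, Matrix.one_mul, Matrix.smul_mul, Matrix.mul_assoc, hinv, Matrix.mul_one]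
end
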